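/- Let H be a real Hilbert space and let f : H → ℝ ∪ {+∞} be proper, convex, and lower semicontinuous. Then for every x ∈ H (including points where f(x) = +∞), the Moreau envelope converges monotonically from below to f as the parameter tends to zero: ε ↦ ᵋf(x) is nonincreasing in ε, and sup_{ε > 0} ᵋf(x) = lim_{ε → 0⁺} ᵋf(x) = f(x), where the limit is taken in ℝ ∪ {+∞}. -/

import Mathlib

/-- Convexity for `EReal`-valued functions on a real vector space. -/
def ConvexE {B : Type*} [AddCommGroup B] [Module ℝ B] (f : B → EReal) : Prop :=
  ∀ x y : B, ∀ a b : ℝ, 0 ≤ a → 0 ≤ b → a + b = 1 →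
    f (a • x + b • y) ≤ (a : EReal) * f x + (b : EReal) * f y

/-- The Moreau envelope `ᵋf(x) = inf_z ( f z + (1/(2ε))‖x − z‖² )`. -/
noncomputable def moreauEnv {H : Type*} [NormedAddCommGroup H] [InnerProductSpace ℝ H]
    (f : H → EReal) (ε : ℝ) (x : H) : EReal :=
  ⨅ z : H, f z + ((1 / (2 * ε) * ‖x - z‖ ^ 2 : ℝ) : EReal)


/-- A proper convex lsc `EReal`-valued function has a continuous affine minorant. -/
lemma exists_affine_minorant {H : Type*} [NormedAddCommGroup H] [InnerProductSpace ℝ H]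
    (f : H → EReal) (hbot : ∀ z, f z ≠ ⊥) (hproper : ∃ z, f z ≠ ⊤)
    (hconv : ∀ x y : H, ∀ a b : ℝ, 0 ≤ a → 0 ≤ b → a + b = 1 →
      f (a • x + b • y) ≤ (a : EReal) * f x + (b : EReal) * f y)
    (hlsc : LowerSemicontinuous f) :
    ∃ (L : H →L[ℝ] ℝ) (c : ℝ), ∀ z, ((L z + c : ℝ) : EReal) ≤ f z := by
  obtain ⟨z₀, hz₀⟩ := hproper
  lift f z₀ to ℝ using ⟨hz₀, hbot z₀⟩ with t₀ ht₀
  set E : Set (H × ℝ) := {p | f p.1 ≤ ((p.2 : ℝ) : EReal)} with hE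
  have hclosed : IsClosed E := by
    rw [← isOpen_compl_iff, isOpen_iff_mem_nhds]
    intro p hp
    have hp' : ((p.2 : ℝ) : EReal) < f p.1 := not_le.1 hp
    obtain ⟨y, hy1, hy2⟩ := EReal.exists_between_coe_real hp'
    have h1 : ∀ᶠ q : H × ℝ in nhds p, (y : EReal) < f q.1 :=
      continuousAt_fst.eventually (hlsc p.1 y hy2)
    have h2 : ∀ᶠ q : H × ℝ in nhds p, q.2 < y :=
      continuousAt_snd.eventually (eventually_lt_nhds (EReal.coe_lt_coe_iff.1 hy1))
    exact (h1.and h2).mono fun q ⟨hq1, hq2⟩ => not_le.2 <|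
      lt_trans (EReal.coe_lt_coe_iff.2 hq2) hq1
  have hconvE : Convex ℝ E := by
    intro p hp q hq a b ha hb hab
    simp only [hE, Set.mem_setOf_eq] at hp hq ⊢
    have h1 : f (a • p.1 + b • q.1) ≤ (a : EReal) * f p.1 + (b : EReal) * f q.1 :=
      hconv p.1 q.1 a b ha hb hab
    have h2 : (a : EReal) * f p.1 ≤ (a : EReal) * (p.2 : EReal) :=
      mul_le_mul_of_nonneg_left hp (by exact_mod_cast ha)
    have h3 : (b : EReal) * f q.1 ≤ (b : EReal) * (q.2 : EReal) :=
      mul_le_mul_of_nonneg_left hq (by exact_mod_cast hb)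
    have : (a • p + b • q).2 = a * p.2 + b * q.2 := by simp [smul_eq_mul]
    rw [show (a • p + b • q).1 = a • p.1 + b • q.1 from rfl, this]
    calc f (a • p.1 + b • q.1) ≤ (a : EReal) * f p.1 + (b : EReal) * f q.1 := h1
      _ ≤ (a : EReal) * (p.2 : EReal) + (b : EReal) * (q.2 : EReal) := add_le_add h2 h3
      _ = ((a * p.2 + b * q.2 : ℝ) : EReal) := by
          rw [EReal.coe_add, EReal.coe_mul, EReal.coe_mul]
  have hp₀ : (z₀, t₀ - 1) ∉ E := by
    simp only [hE, Set.mem_setOf_eq, ← ht₀, not_le]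
    exact_mod_cast sub_lt_self t₀ one_pos
  obtain ⟨φ, s, hφ₀, hφE⟩ := geometric_hahn_banach_point_closed hconvE hclosed hp₀
  set L0 : H →L[ℝ] ℝ := φ.comp (ContinuousLinearMap.inl ℝ H ℝ) with hL0
  set a : ℝ := φ (0, 1) with ha
  have hdecomp : ∀ (z : H) (t : ℝ), φ (z, t) = L0 z + t * a := by
    intro z t
    have h : (z, t) = (z, (0 : ℝ)) + t • ((0 : H), (1 : ℝ)) := by
      simp [Prod.ext_iff]
    rw [h, map_add, map_smul]
    simp [hL0, ha, smul_eq_mul]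
  have hmem : ∀ n : ℝ, 0 ≤ n → (z₀, t₀ + n) ∈ E := by
    intro n hn
    simp only [hE, Set.mem_setOf_eq, ← ht₀]
    exact_mod_cast le_add_of_nonneg_right hn
  have ha_nonneg : 0 ≤ a := by
    by_contra h
    push_neg at h
    set N : ℝ := max 0 ((s - L0 z₀ - t₀ * a) / a) with hN
    have h2 := hφE (z₀, t₀ + N) (hmem N (le_max_left _ _))
    rw [hdecomp] at h2
    have hq : (s - L0 z₀ - t₀ * a) / a ≤ N := le_max_right _ _
    have : N * a ≤ s - L0 z₀ - t₀ * a := by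
      have := mul_le_mul_of_nonpos_right hq h.le
      rwa [div_mul_cancel₀ _ (ne_of_lt h)] at this
    nlinarith
  have hz₀E : (z₀, t₀) ∈ E := by simpa using hmem 0 le_rfl
  have ha_pos : 0 < a := by
    rcases ha_nonneg.lt_or_eq with h | h
    · exact h
    · exfalso
      have h1 := hφE (z₀, t₀) hz₀E
      rw [hdecomp] at h1 hφ₀
      rw [← h] at h1 hφ₀
      linarith
  refine ⟨(-(1 / a)) • L0, s / a, fun z => ?_⟩
  by_cases hz : f z = ⊤
  · rw [hz]; exact le_top
  · lift f z to ℝ using ⟨hz, hbot z⟩ with t ht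
    have hmemz : (z, t) ∈ E := by
      show f z ≤ ((t : ℝ) : EReal)
      rw [← ht]
    have h1 := hφE (z, t) hmemz
    rw [hdecomp] at h1
    rw [EReal.coe_le_coe_iff]
    have heq : ((-(1 / a)) • L0) z + s / a = (s - L0 z) / a := by
      rw [ContinuousLinearMap.smul_apply]
      show -(1 / a) * L0 z + s / a = (s - L0 z) / a
      field_simp
      ring
    rw [heq]
    rw [div_le_iff₀ ha_pos]
    linarith

lemma key_lower_bound {H : Type*} [NormedAddCommGroup H] [InnerProductSpace ℝ H]
    (f : H → EReal) (L : H →L[ℝ] ℝ) (C : ℝ)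
    (hmin : ∀ z, ((L z + C : ℝ) : EReal) ≤ f z)
    (hlsc : LowerSemicontinuous f) (x : H) (c : ℝ) (hc : (c : EReal) < f x) :
    ∃ ε₀ : ℝ, 0 < ε₀ ∧ ∀ ε : ℝ, 0 < ε → ε ≤ ε₀ →
      (c : EReal) ≤ moreauEnv f ε x := by
  obtain ⟨δ, hδ, hnear⟩ := Metric.eventually_nhds_iff.1 (hlsc x c hc)
  set K : ℝ := ‖L‖ with hKdef
  have hK : 0 ≤ K := norm_nonneg L
  set M : ℝ := |c - L x - C| + K ^ 2 + 1 with hMdef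
  have hM : 0 < M := by positivity
  refine ⟨min 1 (δ ^ 2 / (4 * M)), lt_min one_pos (by positivity), fun ε hε hεε₀ => ?_⟩
  have hε1 : ε ≤ 1 := hεε₀.trans (min_le_left _ _)
  have hεM : ε * M ≤ δ ^ 2 / 4 := by
    have h := hεε₀.trans (min_le_right _ _)
    rw [le_div_iff₀ (by positivity)] at h
    nlinarith
  refine le_iInf fun z => ?_
  rcases lt_or_ge (dist z x) δ with hzx | hzx
  · have h1 : (c : EReal) ≤ f z := (hnear hzx).le
    have h2 : f z = f z + ((0 : ℝ) : EReal) := by simp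
    calc (c : EReal) ≤ f z := h1
      _ = f z + ((0 : ℝ) : EReal) := h2
      _ ≤ f z + ((1 / (2 * ε) * ‖x - z‖ ^ 2 : ℝ) : EReal) := by
          apply add_le_add_right
          exact EReal.coe_le_coe_iff.2 (by positivity)
  · set r : ℝ := ‖x - z‖ with hrdef
    have hr : δ ≤ r := by
      rw [dist_eq_norm] at hzx
      rwa [hrdef, norm_sub_rev]
    have hr0 : 0 < r := hδ.trans_le hr
    have hr2 : δ ^ 2 ≤ r ^ 2 := by nlinarith
    have hLz : L x - K * r ≤ L z := by
      have h := L.le_opNorm (x - z)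
      rw [map_sub, Real.norm_eq_abs] at h
      have := abs_le.1 h
      linarith [this.2]
    have h5 : ε * (c - L x - C) ≤ ε * |c - L x - C| :=
      mul_le_mul_of_nonneg_left (le_abs_self _) hε.le
    have h6 : ε * (ε * K ^ 2) ≤ 1 * (ε * K ^ 2) :=
      mul_le_mul_of_nonneg_right hε1 (by positivity)
    have key : (c - (L x + C - K * r)) * (2 * ε) ≤ r ^ 2 := by
      nlinarith [sq_nonneg (r - 2 * ε * K), hεM, h5, h6, hε.le, hr2, hε]
    have hreal : c ≤ L z + C + 1 / (2 * ε) * r ^ 2 := by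
      have h2ε : (0 : ℝ) < 2 * ε := by linarith
      have h7 : c - (L x + C - K * r) ≤ r ^ 2 / (2 * ε) := (le_div_iff₀ h2ε).2 key
      have h8 : 1 / (2 * ε) * r ^ 2 = r ^ 2 / (2 * ε) := by ring
      linarith
    calc (c : EReal) ≤ ((L z + C + 1 / (2 * ε) * r ^ 2 : ℝ) : EReal) :=
          EReal.coe_le_coe_iff.2 hreal
      _ = ((L z + C : ℝ) : EReal) + ((1 / (2 * ε) * r ^ 2 : ℝ) : EReal) := by
          rw [← EReal.coe_add]
      _ ≤ f z + ((1 / (2 * ε) * ‖x - z‖ ^ 2 : ℝ) : EReal) :=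
          add_le_add_left (hmin z) _

/-- for every `x` (including points where `f x = +∞`), the Moreau
envelope is nonincreasing in the parameter, and converges monotonically from below
to `f x` as the parameter tends to `0⁺`:
`sup_{ε>0} ᵋf(x) = lim_{ε→0⁺} ᵋf(x) = f(x)` in `ℝ ∪ {+∞}`. -/
theorem stmt15 {H : Type*} [NormedAddCommGroup H] [InnerProductSpace ℝ H]
    [CompleteSpace H]
    (f : H → EReal) (hbot : ∀ z, f z ≠ ⊥) (hproper : ∃ z, f z ≠ ⊤)
    (hconv : ConvexE f) (hlsc : LowerSemicontinuous f) (x : H) :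
    (∀ ε δ : ℝ, 0 < ε → ε ≤ δ → moreauEnv f δ x ≤ moreauEnv f ε x) ∧
    (∀ ε : ℝ, 0 < ε → moreauEnv f ε x ≤ f x) ∧
    (⨆ ε : {e : ℝ // 0 < e}, moreauEnv f (ε : ℝ) x) = f x ∧
    Filter.Tendsto (fun ε : ℝ => moreauEnv f ε x)
      (nhdsWithin 0 (Set.Ioi 0)) (nhds (f x)) := by
  have h1 : ∀ ε δ : ℝ, 0 < ε → ε ≤ δ → moreauEnv f δ x ≤ moreauEnv f ε x := by
    intro ε δ hε hεδ
    refine iInf_mono fun z => add_le_add_right ?_ (f z)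
    rw [EReal.coe_le_coe_iff]
    refine mul_le_mul_of_nonneg_right ?_ (by positivity)
    apply one_div_le_one_div_of_le (by linarith) (by linarith)
  have h2 : ∀ ε : ℝ, 0 < ε → moreauEnv f ε x ≤ f x := by
    intro ε hε
    unfold moreauEnv
    refine le_trans (iInf_le _ x) ?_
    have h0 : (1 / (2 * ε) * ‖x - x‖ ^ 2 : ℝ) = 0 := by simp
    rw [h0, EReal.coe_zero, add_zero]
  obtain ⟨L, C, hmin⟩ := exists_affine_minorant f hbot hproper hconv hlsc
  have hkey := key_lower_bound f L C hmin hlsc x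
  have h3 : (⨆ ε : {e : ℝ // 0 < e}, moreauEnv f (ε : ℝ) x) = f x := by
    refine le_antisymm (iSup_le fun ε => h2 ε ε.2) ?_
    by_contra h
    push_neg at h
    obtain ⟨c, hc1, hc2⟩ := EReal.exists_between_coe_real h
    obtain ⟨ε₀, hε₀, hc⟩ := hkey c hc2
    have hle := le_iSup (fun ε : {e : ℝ // 0 < e} => moreauEnv f (ε : ℝ) x) ⟨ε₀, hε₀⟩
    exact absurd (le_trans (hc ε₀ hε₀ le_rfl) hle) (not_le.2 hc1)
  refine ⟨h1, h2, h3, ?_⟩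
  rw [tendsto_order]
  constructor
  · intro b hb
    rw [← h3] at hb
    obtain ⟨⟨ε₀, hε₀⟩, hlt⟩ := lt_iSup_iff.1 hb
    filter_upwards [Ioc_mem_nhdsGT hε₀] with ε hε
    exact hlt.trans_le (h1 ε ε₀ hε.1 hε.2)
  · intro b hb
    filter_upwards [self_mem_nhdsWithin] with ε hε
    exact (h2 ε hε).trans_lt hb
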